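/- There exist a finite directed graph G = (V,E) with nonnegative arc weights, a partition P of V, and two scalar nodal attributes a, b : V → ℝ such that the aggregated intra-group assortativity coefficients coincide, r_in(a) = r_in(b) (both being defined, i.e. with positive endpoint variances), while the interior–boundary assortativity profiles differ: ρ_T(a;P) ≠ ρ_T(b;P) for at least one arc type T ∈ {I→I, I→B, B→I} (with both sides defined). -/

import Mathlib

open Finset
open scoped Classical

/-- A node `v` is interior (relative to the block assignment `P` and arc set `Ed`)
if all of its in- and out-neighbours lie in its own block. -/
def IsInterior {V K : Type*} (Ed : Finset (V × V)) (P : V → K) (v : V) : Prop :=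
  ∀ u, ((u, v) ∈ Ed ∨ (v, u) ∈ Ed) → P u = P v

/-- Arcs whose tail and head are interior nodes of the same block. -/
noncomputable def EII {V K : Type*} (Ed : Finset (V × V)) (P : V → K) : Finset (V × V) :=
  Ed.filter (fun e => P e.1 = P e.2 ∧ IsInterior Ed P e.1 ∧ IsInterior Ed P e.2)

/-- Arcs with interior tail and boundary head in the same block. -/
noncomputable def EIB {V K : Type*} (Ed : Finset (V × V)) (P : V → K) : Finset (V × V) :=
  Ed.filter (fun e => P e.1 = P e.2 ∧ IsInterior Ed P e.1 ∧ ¬ IsInterior Ed P e.2)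

/-- Arcs with boundary tail and interior head in the same block. -/
noncomputable def EBI {V K : Type*} (Ed : Finset (V × V)) (P : V → K) : Finset (V × V) :=
  Ed.filter (fun e => P e.1 = P e.2 ∧ ¬ IsInterior Ed P e.1 ∧ IsInterior Ed P e.2)

/-- All intra-group arcs (union of the three intra-group strata). -/
noncomputable def Ein {V K : Type*} (Ed : Finset (V × V)) (P : V → K) : Finset (V × V) :=
  EII Ed P ∪ EIB Ed P ∪ EBI Ed P

/-- Mean of `f` over a finite set of arcs. -/
noncomputable def pairMean {V : Type*} (s : Finset (V × V)) (f : V × V → ℝ) : ℝ :=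
  (∑ e ∈ s, f e) / s.card

/-- Empirical covariance of `f` and `g` over a finite set of arcs. -/
noncomputable def pairCov {V : Type*} (s : Finset (V × V)) (f g : V × V → ℝ) : ℝ :=
  (∑ e ∈ s, (f e - pairMean s f) * (g e - pairMean s g)) / s.card

/-- Pearson correlation of `f` and `g` over a finite set of arcs. -/
noncomputable def pairCorr {V : Type*} (s : Finset (V × V)) (f g : V × V → ℝ) : ℝ :=
  pairCov s f g / (Real.sqrt (pairCov s f f) * Real.sqrt (pairCov s g g))

/-- Attribute value at the tail of an arc. -/
def tl {V : Type*} (x : V → ℝ) : V × V → ℝ := fun e => x e.1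

/-- Attribute value at the head of an arc. -/
def hd {V : Type*} (x : V → ℝ) : V × V → ℝ := fun e => x e.2

/-- The Pearson correlation of `(x(u), x(v))` over arcs `(u,v) ∈ s` is defined
(has positive endpoint variances). -/
def DefinedOn {V : Type*} (s : Finset (V × V)) (x : V → ℝ) : Prop :=
  0 < pairCov s (tl x) (tl x) ∧ 0 < pairCov s (hd x) (hd x)

/-- Type-restricted assortativity: Pearson correlation of endpoint attribute values. -/
noncomputable def rOn {V : Type*} (s : Finset (V × V)) (x : V → ℝ) : ℝ :=
  pairCorr s (tl x) (hd x)


-- ===== auxiliary construction =====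

def myEd : Finset (Fin 15 × Fin 15) :=
  {(0,1),(2,3),(4,5),(6,7),(8,12),(9,13),(12,10),(13,11),(12,14),(13,14)}
def myP : Fin 15 → Fin 2 := fun v => if v.val = 14 then 1 else 0
def aF : Fin 15 → ℝ := fun v => if v.val ∈ ({3,4,6,7,9,10,13} : Finset ℕ) then 1 else 0
def bF : Fin 15 → ℝ := fun v => if v.val ∈ ({4,5,6,7,9,11,12} : Finset ℕ) then 1 else 0

def S4 : Finset (Fin 15 × Fin 15) := {(0,1),(2,3),(4,5),(6,7)}
def S8 : Finset (Fin 15 × Fin 15) := {(0,1),(2,3),(4,5),(6,7),(8,12),(9,13),(12,10),(13,11)}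

set_option maxRecDepth 100000 in
lemma hEII : EII myEd myP = S4 := by
  ext e
  have hm : ∀ (p : Fin 15 × Fin 15 → Prop) (i : DecidablePred p) (s : Finset (Fin 15 × Fin 15)) (a : Fin 15 × Fin 15),
      a ∈ @Finset.filter _ p i s ↔ a ∈ s ∧ p a := fun p i s a => @Finset.mem_filter _ p i s a
  rw [EII, hm]
  simp only [EII, S4, mem_filter, IsInterior, myEd, myP]
  revert e; decide

set_option maxRecDepth 100000 in
lemma hEIB : EIB myEd myP = ({(8,12),(9,13)} : Finset (Fin 15 × Fin 15)) := by
  ext e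
  have hm : ∀ (p : Fin 15 × Fin 15 → Prop) (i : DecidablePred p) (s : Finset (Fin 15 × Fin 15)) (a : Fin 15 × Fin 15),
      a ∈ @Finset.filter _ p i s ↔ a ∈ s ∧ p a := fun p i s a => @Finset.mem_filter _ p i s a
  rw [EIB, hm]
  simp only [EIB, mem_filter, IsInterior, myEd, myP]
  revert e; decide

set_option maxRecDepth 100000 in
lemma hEBI : EBI myEd myP = ({(12,10),(13,11)} : Finset (Fin 15 × Fin 15)) := by
  ext e
  have hm : ∀ (p : Fin 15 × Fin 15 → Prop) (i : DecidablePred p) (s : Finset (Fin 15 × Fin 15)) (a : Fin 15 × Fin 15),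
      a ∈ @Finset.filter _ p i s ↔ a ∈ s ∧ p a := fun p i s a => @Finset.mem_filter _ p i s a
  rw [EBI, hm]
  simp only [EBI, mem_filter, IsInterior, myEd, myP]
  revert e; decide

set_option maxRecDepth 100000 in
lemma hEin : Ein myEd myP = S8 := by
  rw [Ein, hEII, hEIB, hEBI]
  ext e
  simp only [S4, S8, mem_union, mem_insert, mem_singleton]
  revert e; decide

lemma ha0 : aF 0 = 0 := by norm_num [aF, show ((0:Fin 15):ℕ) = 0 from rfl]
lemma ha1 : aF 1 = 0 := by norm_num [aF, show ((1:Fin 15):ℕ) = 1 from rfl]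
lemma ha2 : aF 2 = 0 := by norm_num [aF, show ((2:Fin 15):ℕ) = 2 from rfl]
lemma ha3 : aF 3 = 1 := by norm_num [aF, show ((3:Fin 15):ℕ) = 3 from rfl]
lemma ha4 : aF 4 = 1 := by norm_num [aF, show ((4:Fin 15):ℕ) = 4 from rfl]
lemma ha5 : aF 5 = 0 := by norm_num [aF, show ((5:Fin 15):ℕ) = 5 from rfl]
lemma ha6 : aF 6 = 1 := by norm_num [aF, show ((6:Fin 15):ℕ) = 6 from rfl]
lemma ha7 : aF 7 = 1 := by norm_num [aF, show ((7:Fin 15):ℕ) = 7 from rfl]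
lemma ha8 : aF 8 = 0 := by norm_num [aF, show ((8:Fin 15):ℕ) = 8 from rfl]
lemma ha9 : aF 9 = 1 := by norm_num [aF, show ((9:Fin 15):ℕ) = 9 from rfl]
lemma ha10 : aF 10 = 1 := by norm_num [aF, show ((10:Fin 15):ℕ) = 10 from rfl]
lemma ha11 : aF 11 = 0 := by norm_num [aF, show ((11:Fin 15):ℕ) = 11 from rfl]
lemma ha12 : aF 12 = 0 := by norm_num [aF, show ((12:Fin 15):ℕ) = 12 from rfl]
lemma ha13 : aF 13 = 1 := by norm_num [aF, show ((13:Fin 15):ℕ) = 13 from rfl]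
lemma hb0 : bF 0 = 0 := by norm_num [bF, show ((0:Fin 15):ℕ) = 0 from rfl]
lemma hb1 : bF 1 = 0 := by norm_num [bF, show ((1:Fin 15):ℕ) = 1 from rfl]
lemma hb2 : bF 2 = 0 := by norm_num [bF, show ((2:Fin 15):ℕ) = 2 from rfl]
lemma hb3 : bF 3 = 0 := by norm_num [bF, show ((3:Fin 15):ℕ) = 3 from rfl]
lemma hb4 : bF 4 = 1 := by norm_num [bF, show ((4:Fin 15):ℕ) = 4 from rfl]
lemma hb5 : bF 5 = 1 := by norm_num [bF, show ((5:Fin 15):ℕ) = 5 from rfl]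
lemma hb6 : bF 6 = 1 := by norm_num [bF, show ((6:Fin 15):ℕ) = 6 from rfl]
lemma hb7 : bF 7 = 1 := by norm_num [bF, show ((7:Fin 15):ℕ) = 7 from rfl]
lemma hb8 : bF 8 = 0 := by norm_num [bF, show ((8:Fin 15):ℕ) = 8 from rfl]
lemma hb9 : bF 9 = 1 := by norm_num [bF, show ((9:Fin 15):ℕ) = 9 from rfl]
lemma hb10 : bF 10 = 0 := by norm_num [bF, show ((10:Fin 15):ℕ) = 10 from rfl]
lemma hb11 : bF 11 = 1 := by norm_num [bF, show ((11:Fin 15):ℕ) = 11 from rfl]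
lemma hb12 : bF 12 = 1 := by norm_num [bF, show ((12:Fin 15):ℕ) = 12 from rfl]
lemma hb13 : bF 13 = 0 := by norm_num [bF, show ((13:Fin 15):ℕ) = 13 from rfl]

lemma card4 : (#(({(0,1),(2,3),(4,5),(6,7)}) : Finset (Fin 15 × Fin 15))) = 4 := by decide
lemma card8 : (#(({(0,1),(2,3),(4,5),(6,7),(8,12),(9,13),(12,10),(13,11)}) : Finset (Fin 15 × Fin 15))) = 8 := by decide

lemma covA4th : pairCov S4 (tl aF) (hd aF) = 0 := by
  simp only [pairCov, pairMean, tl, hd, S4]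
  repeat rw [Finset.sum_insert (by decide)]
  simp only [Finset.sum_singleton, card4]
  norm_num [ha0, ha1, ha2, ha3, ha4, ha5, ha6, ha7]

lemma covA4tt : pairCov S4 (tl aF) (tl aF) = 1/4 := by
  simp only [pairCov, pairMean, tl, hd, S4]
  repeat rw [Finset.sum_insert (by decide)]
  simp only [Finset.sum_singleton, card4]
  norm_num [ha0, ha1, ha2, ha3, ha4, ha5, ha6, ha7]

lemma covA4hh : pairCov S4 (hd aF) (hd aF) = 1/4 := by
  simp only [pairCov, pairMean, tl, hd, S4]
  repeat rw [Finset.sum_insert (by decide)]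
  simp only [Finset.sum_singleton, card4]
  norm_num [ha0, ha1, ha2, ha3, ha4, ha5, ha6, ha7]

lemma covB4th : pairCov S4 (tl bF) (hd bF) = 1/4 := by
  simp only [pairCov, pairMean, tl, hd, S4]
  repeat rw [Finset.sum_insert (by decide)]
  simp only [Finset.sum_singleton, card4]
  norm_num [hb0, hb1, hb2, hb3, hb4, hb5, hb6, hb7]

lemma covB4tt : pairCov S4 (tl bF) (tl bF) = 1/4 := by
  simp only [pairCov, pairMean, tl, hd, S4]
  repeat rw [Finset.sum_insert (by decide)]
  simp only [Finset.sum_singleton, card4]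
  norm_num [hb0, hb1, hb2, hb3, hb4, hb5, hb6, hb7]

lemma covB4hh : pairCov S4 (hd bF) (hd bF) = 1/4 := by
  simp only [pairCov, pairMean, tl, hd, S4]
  repeat rw [Finset.sum_insert (by decide)]
  simp only [Finset.sum_singleton, card4]
  norm_num [hb0, hb1, hb2, hb3, hb4, hb5, hb6, hb7]

lemma covA8th : pairCov S8 (tl aF) (hd aF) = 0 := by
  simp only [pairCov, pairMean, tl, hd, S8]
  repeat rw [Finset.sum_insert (by decide)]
  simp only [Finset.sum_singleton, card8]
  norm_num [ha0, ha1, ha2, ha3, ha4, ha5, ha6, ha7, ha8, ha9, ha10, ha11, ha12, ha13]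

lemma covA8tt : pairCov S8 (tl aF) (tl aF) = 1/4 := by
  simp only [pairCov, pairMean, tl, hd, S8]
  repeat rw [Finset.sum_insert (by decide)]
  simp only [Finset.sum_singleton, card8]
  norm_num [ha0, ha1, ha2, ha3, ha4, ha5, ha6, ha7, ha8, ha9, ha10, ha11, ha12, ha13]

lemma covA8hh : pairCov S8 (hd aF) (hd aF) = 1/4 := by
  simp only [pairCov, pairMean, tl, hd, S8]
  repeat rw [Finset.sum_insert (by decide)]
  simp only [Finset.sum_singleton, card8]
  norm_num [ha0, ha1, ha2, ha3, ha4, ha5, ha6, ha7, ha8, ha9, ha10, ha11, ha12, ha13]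

lemma covB8th : pairCov S8 (tl bF) (hd bF) = 0 := by
  simp only [pairCov, pairMean, tl, hd, S8]
  repeat rw [Finset.sum_insert (by decide)]
  simp only [Finset.sum_singleton, card8]
  norm_num [hb0, hb1, hb2, hb3, hb4, hb5, hb6, hb7, hb8, hb9, hb10, hb11, hb12, hb13]

lemma covB8tt : pairCov S8 (tl bF) (tl bF) = 1/4 := by
  simp only [pairCov, pairMean, tl, hd, S8]
  repeat rw [Finset.sum_insert (by decide)]
  simp only [Finset.sum_singleton, card8]
  norm_num [hb0, hb1, hb2, hb3, hb4, hb5, hb6, hb7, hb8, hb9, hb10, hb11, hb12, hb13]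

lemma covB8hh : pairCov S8 (hd bF) (hd bF) = 1/4 := by
  simp only [pairCov, pairMean, tl, hd, S8]
  repeat rw [Finset.sum_insert (by decide)]
  simp only [Finset.sum_singleton, card8]
  norm_num [hb0, hb1, hb2, hb3, hb4, hb5, hb6, hb7, hb8, hb9, hb10, hb11, hb12, hb13]

lemma sqrt_quarter : Real.sqrt (1/4) = 1/2 := by
  rw [show (1/4:ℝ) = (1/2)^2 by norm_num, Real.sqrt_sq (by norm_num)]

/-- Loss of resolution under scalar aggregation: two attributes can have equal
aggregated intra-group assortativity coefficients while their interior--boundary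
assortativity profiles differ on some intra-group arc type. -/
theorem loss_of_resolution :
    ∃ (n K : ℕ) (Ed : Finset (Fin n × Fin n)) (P : Fin n → Fin K)
      (w : Fin n × Fin n → ℝ) (a b : Fin n → ℝ),
      (∀ e, 0 ≤ w e) ∧
      DefinedOn (Ein Ed P) a ∧ DefinedOn (Ein Ed P) b ∧
      rOn (Ein Ed P) a = rOn (Ein Ed P) b ∧
      ((DefinedOn (EII Ed P) a ∧ DefinedOn (EII Ed P) b ∧
          rOn (EII Ed P) a ≠ rOn (EII Ed P) b) ∨
       (DefinedOn (EIB Ed P) a ∧ DefinedOn (EIB Ed P) b ∧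
          rOn (EIB Ed P) a ≠ rOn (EIB Ed P) b) ∨
       (DefinedOn (EBI Ed P) a ∧ DefinedOn (EBI Ed P) b ∧
          rOn (EBI Ed P) a ≠ rOn (EBI Ed P) b)) := by
  
  refine ⟨15, 2, myEd, myP, fun _ => 0, aF, bF, fun _ => le_refl 0, ?_, ?_, ?_, ?_⟩
  · rw [hEin]
    exact ⟨by rw [covA8tt]; norm_num, by rw [covA8hh]; norm_num⟩
  · rw [hEin]
    exact ⟨by rw [covB8tt]; norm_num, by rw [covB8hh]; norm_num⟩
  · rw [rOn, rOn, pairCorr, pairCorr, hEin, covA8th, covB8th]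
    simp
  · left
    refine ⟨?_, ?_, ?_⟩
    · rw [hEII]
      exact ⟨by rw [covA4tt]; norm_num, by rw [covA4hh]; norm_num⟩
    · rw [hEII]
      exact ⟨by rw [covB4tt]; norm_num, by rw [covB4hh]; norm_num⟩
    · rw [rOn, rOn, pairCorr, pairCorr, hEII, covA4th, covB4th, covB4tt, covB4hh,
        sqrt_quarter]
      norm_num
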